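/- arXiv:2008.09231 — 4 statements merged into one kernel-verified Lean document; each statement's English description precedes it below -/
import Mathlib

section
/- The relational model is a DIBI frame: the structure (M^P, ⊑, ⊕, ⊙, M^P), where ⊕ and ⊙ are the partial deterministic parallel and sequential compositions of input-preserving powerset kernels (regarded as operations returning at most a singleton set) and the unit set is all of M^P, satisfies all twelve DIBI frame conditions; in particular ⊑ is a preorder on M^P. -/
/-- A DIBI frame: a preorder `le` on `X`, non-deterministic binary operations
`oplus` and `odot`, and a set of units `E`, satisfying the twelve DIBI frame conditions. -/
structure IsDIBIFrame {X : Type*} (le : X → X → Prop) (oplus odot : X → X → Set X)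
    (E : Set X) : Prop where
  le_refl : ∀ x, le x x
  le_trans : ∀ x y z, le x y → le y z → le x z
  oplus_down : ∀ x y z x' y', z ∈ oplus x y → le x' x → le y' y →
    ∃ z', le z' z ∧ z' ∈ oplus x' y'
  odot_up : ∀ x y z z', z ∈ odot x y → le z z' →
    ∃ x' y', le x x' ∧ le y y' ∧ z' ∈ odot x' y'
  oplus_comm : ∀ x y z, z ∈ oplus x y → z ∈ oplus y x
  oplus_assoc : ∀ x y z t w, w ∈ oplus t z → t ∈ oplus x y →
    ∃ s, s ∈ oplus y z ∧ w ∈ oplus x s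
  oplus_unit_exists : ∀ x, ∃ e ∈ E, x ∈ oplus e x
  oplus_unit_coherence : ∀ e x y, e ∈ E → x ∈ oplus y e → le y x
  odot_assoc : ∀ x y z w, (∃ t, w ∈ odot t z ∧ t ∈ odot x y) ↔
    (∃ s, s ∈ odot y z ∧ w ∈ odot x s)
  odot_unit_exists_left : ∀ x, ∃ e ∈ E, x ∈ odot e x
  odot_unit_exists_right : ∀ x, ∃ e ∈ E, x ∈ odot x e
  odot_coherence_right : ∀ e x y, e ∈ E → x ∈ odot y e → le y x
  unit_closure : ∀ e e', e ∈ E → le e e' → e' ∈ E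
  rev_exchange : ∀ x y z y1 y2 z1 z2, x ∈ oplus y z → y ∈ odot y1 y2 → z ∈ odot z1 z2 →
    ∃ u v, u ∈ oplus y1 z1 ∧ v ∈ oplus y2 z2 ∧ x ∈ odot u v
open scoped ENNReal

/-- A memory over a set `S` of variables: an assignment of a value to each
variable in `S`. -/
def Mem (Val Var : Type) (S : Set Var) : Type := S → Val

/-- Restriction (projection) of a memory to a smaller domain. -/
def restr {Val Var : Type} {S T : Set Var} (h : T ⊆ S) (m : Mem Val Var S) :
    Mem Val Var T :=
  fun t => m ⟨t.1, h t.2⟩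

/-- Two memories (over possibly different domains) agree if they coincide on the
intersection of their domains.  For `T ⊆ S`, `Agree m r` says exactly that `r`
is the restriction `m^T`. -/
def Agree {Val Var : Type} {S T : Set Var} (m : Mem Val Var S) (r : Mem Val Var T) : Prop :=
  ∀ (i : Var) (h1 : i ∈ S) (h2 : i ∈ T), m ⟨i, h1⟩ = r ⟨i, h2⟩
/-- Projection (marginalization) of a set of memories over `S` to memories over
`T` (intended for `T ⊆ S`, where it yields `{m^T : m ∈ R}`). -/
def margS {Val Var : Type} {S : Set Var} (R : Set (Mem Val Var S)) (T : Set Var) :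
    Set (Mem Val Var T) :=
  {r | ∃ m ∈ R, Agree m r}

/-- The natural join of two relations (sets of memories). -/
def natJoin {Val Var : Type} {S T : Set Var}
    (R1 : Set (Mem Val Var S)) (R2 : Set (Mem Val Var T)) :
    Set (Mem Val Var (S ∪ T)) :=
  {m | restr Set.subset_union_left m ∈ R1 ∧ restr Set.subset_union_right m ∈ R2}

/-- A powerset-kernel-shaped map on memories, with explicit domain and range. -/
structure RKernel (Val Var : Type) where
  dom : Set Var
  ran : Set Var
  f : Mem Val Var dom → Set (Mem Val Var ran)

/-- Membership in `M^P`: `K` is a powerset kernel preserving its input to its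
output: the projection of `K.f d` to the domain is `{d}`. -/
def InMP {Val Var : Type} (K : RKernel Val Var) : Prop :=
  K.dom ⊆ K.ran ∧ ∀ d, margS (K.f d) K.dom = {d}

/-- Definedness condition for parallel composition. -/
def ROplusDef {Val Var : Type} (K1 K2 : RKernel Val Var) : Prop :=
  K1.ran ∩ K2.ran = K1.dom ∩ K2.dom

/-- Parallel composition of powerset kernels. -/
def roplus {Val Var : Type} (K1 K2 : RKernel Val Var) : RKernel Val Var where
  dom := K1.dom ∪ K2.dom
  ran := K1.ran ∪ K2.ran
  f := fun d =>
    natJoin (K1.f (restr Set.subset_union_left d)) (K2.f (restr Set.subset_union_right d))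

open Classical in
/-- Sequential (Kleisli) composition of powerset kernels, defined when
`K1.ran = K2.dom` (and returning the empty kernel otherwise). -/
noncomputable def rodot {Val Var : Type} (K1 K2 : RKernel Val Var) : RKernel Val Var where
  dom := K1.dom
  ran := K2.ran
  f := fun d =>
    if h : K1.ran = K2.dom then
      {v | ∃ u ∈ K1.f d, v ∈ K2.f (restr (le_of_eq h.symm) u)}
    else ∅

/-- The identity (unit) powerset kernel on memories over `R`. -/
def unitR (Val Var : Type) (R : Set Var) : RKernel Val Var where
  dom := R
  ran := R
  f := fun d => {d}

/-- The preorder on powerset kernels: `f ⊑ g` iff `g = (f ⊕ unit_R) ⊙ h` for some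
set of variables `R` and some `h ∈ M^P` (with both compositions defined). -/
def rle {Val Var : Type} (K1 K2 : RKernel Val Var) : Prop :=
  ∃ (R : Set Var) (h : RKernel Val Var), InMP h ∧
    ROplusDef K1 (unitR Val Var R) ∧
    (roplus K1 (unitR Val Var R)).ran = h.dom ∧
    K2 = rodot (roplus K1 (unitR Val Var R)) h

/-- The carrier of the relational model: input-preserving powerset kernels. -/
def MP (Val Var : Type) : Type := {K : RKernel Val Var // InMP K}

/-- Parallel composition, as a non-deterministic (in fact, partial deterministic)
operation on `M^P`: the singleton of `x ⊕ y` when defined, and `∅` otherwise. -/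
def mpOplus {Val Var : Type} (x y : MP Val Var) : Set (MP Val Var) :=
  {z | ROplusDef x.1 y.1 ∧ z.1 = roplus x.1 y.1}

/-- Sequential composition, as a non-deterministic (in fact, partial deterministic)
operation on `M^P`: the singleton of `x ⊙ y` when defined, and `∅` otherwise. -/
noncomputable def mpOdot {Val Var : Type} (x y : MP Val Var) : Set (MP Val Var) :=
  {z | x.1.ran = y.1.dom ∧ z.1 = rodot x.1 y.1}

section Helpers

open Classical

variable {Val Var : Type}

/-- Transport a memory along an equality of domains. -/
def castMem {S T : Set Var} (h : S = T) (m : Mem Val Var S) : Mem Val Var T :=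
  fun t => m ⟨t.1, h ▸ t.2⟩

theorem RKernel.ext2 {K1 K2 : RKernel Val Var} (hd : K1.dom = K2.dom) (hr : K1.ran = K2.ran)
    (hf : ∀ (m : Mem Val Var K1.dom) (r : Mem Val Var K1.ran),
      castMem hr r ∈ K2.f (castMem hd m) ↔ r ∈ K1.f m) : K1 = K2 := by
  obtain ⟨d1, r1, f1⟩ := K1
  obtain ⟨d2, r2, f2⟩ := K2
  dsimp at hd hr hf
  subst hd; subst hr
  simp only [RKernel.mk.injEq, heq_eq_eq, true_and]
  funext m
  ext r
  exact (hf m r).symm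

theorem Mem.union_ext {S T : Set Var} {m n : Mem Val Var (S ∪ T)}
    (h1 : restr Set.subset_union_left m = restr Set.subset_union_left n)
    (h2 : restr Set.subset_union_right m = restr Set.subset_union_right n) : m = n := by
  funext t
  obtain ⟨i, hi⟩ := t
  rcases hi with hS | hT
  · exact congrFun h1 ⟨i, hS⟩
  · exact congrFun h2 ⟨i, hT⟩

/-- Combine two memories (using the first on overlaps). -/
noncomputable def combine {S T : Set Var} (m1 : Mem Val Var S) (m2 : Mem Val Var T) :
    Mem Val Var (S ∪ T) :=
  fun t => if h : t.1 ∈ S then m1 ⟨t.1, h⟩ else m2 ⟨t.1, t.2.resolve_left h⟩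

theorem combine_restr_left {S T : Set Var} (m1 : Mem Val Var S) (m2 : Mem Val Var T) :
    restr Set.subset_union_left (combine m1 m2) = m1 := by
  funext t
  exact dif_pos t.2

theorem combine_restr_right {S T : Set Var} (m1 : Mem Val Var S) (m2 : Mem Val Var T)
    (hag : ∀ i (h1 : i ∈ S) (h2 : i ∈ T), m1 ⟨i, h1⟩ = m2 ⟨i, h2⟩) :
    restr Set.subset_union_right (combine m1 m2) = m2 := by
  funext t
  obtain ⟨i, hi⟩ := t
  by_cases h : i ∈ S
  · simpa [restr, combine, h] using hag i h hi
  · simp [restr, combine, h]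

theorem margS_eq_singleton {S U : Set Var} (h : S ⊆ U) {R : Set (Mem Val Var U)}
    {d : Mem Val Var S} (hne : R.Nonempty) (hres : ∀ m ∈ R, restr h m = d) :
    margS R S = {d} := by
  ext r
  simp only [Set.mem_singleton_iff, margS, Set.mem_setOf_eq]
  constructor
  · rintro ⟨m, hm, hag⟩
    funext t
    rw [← hres m hm]
    exact (hag t.1 (h t.2) t.2).symm
  · rintro rfl
    obtain ⟨m, hm⟩ := hne
    exact ⟨m, hm, fun i h1 h2 => by rw [← hres m hm]; rfl⟩

theorem InMP.restr_eq {K : RKernel Val Var} (hK : InMP K) {d} {m} (hm : m ∈ K.f d) :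
    restr hK.1 m = d := by
  have h := hK.2 d
  have : restr hK.1 m ∈ margS (K.f d) K.dom :=
    ⟨m, hm, fun i h1 h2 => rfl⟩
  rw [h] at this
  exact this

theorem InMP.nonempty {K : RKernel Val Var} (hK : InMP K) (d) : (K.f d).Nonempty := by
  have h := hK.2 d
  have : d ∈ margS (K.f d) K.dom := by rw [h]; rfl
  obtain ⟨m, hm, -⟩ := this
  exact ⟨m, hm⟩

theorem unitR_InMP (R : Set Var) : InMP (unitR Val Var R) := by
  refine ⟨le_refl _, fun d => margS_eq_singleton (le_refl _) ⟨d, rfl⟩ ?_⟩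
  rintro m rfl
  rfl

theorem roplus_InMP {K1 K2 : RKernel Val Var} (h1 : InMP K1) (h2 : InMP K2)
    (hD : ROplusDef K1 K2) : InMP (roplus K1 K2) := by
  have hsub : K1.dom ∪ K2.dom ⊆ K1.ran ∪ K2.ran := Set.union_subset_union h1.1 h2.1
  refine ⟨hsub, fun d => margS_eq_singleton hsub ?_ ?_⟩
  · -- nonempty
    obtain ⟨m1, hm1⟩ := h1.nonempty (restr Set.subset_union_left d)
    obtain ⟨m2, hm2⟩ := h2.nonempty (restr Set.subset_union_right d)
    refine ⟨combine m1 m2, ?_, ?_⟩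
    · show restr _ (combine m1 m2) ∈ _
      rw [combine_restr_left]; exact hm1
    · show restr _ (combine m1 m2) ∈ _
      rw [combine_restr_right]
      · exact hm2
      · -- agreement on the overlap
        intro i hi1 hi2
        have hmem : i ∈ K1.dom ∩ K2.dom := by
          rw [← hD]; exact ⟨hi1, hi2⟩
        have e1 : m1 ⟨i, hi1⟩ = d ⟨i, Or.inl hmem.1⟩ :=
          congrFun (h1.restr_eq hm1) ⟨i, hmem.1⟩
        have e2 : m2 ⟨i, hi2⟩ = d ⟨i, Or.inr hmem.2⟩ :=
          congrFun (h2.restr_eq hm2) ⟨i, hmem.2⟩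
        rw [e1, e2]
  · rintro m ⟨hm1, hm2⟩
    have e1 := h1.restr_eq hm1
    have e2 := h2.restr_eq hm2
    apply Mem.union_ext
    · funext t
      exact congrFun e1 t
    · funext t
      exact congrFun e2 t

theorem rodot_InMP {K1 K2 : RKernel Val Var} (h1 : InMP K1) (h2 : InMP K2)
    (h : K1.ran = K2.dom) : InMP (rodot K1 K2) := by
  have hsub : K1.dom ⊆ K2.ran := fun i hi => h2.1 (h ▸ h1.1 hi)
  refine ⟨hsub, fun d => margS_eq_singleton hsub ?_ ?_⟩
  · obtain ⟨u, hu⟩ := h1.nonempty d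
    obtain ⟨v, hv⟩ := h2.nonempty (restr (le_of_eq h.symm) u)
    exact ⟨v, by show v ∈ dite _ _ _; rw [dif_pos h]; exact ⟨u, hu, hv⟩⟩
  · intro m hm
    have e : (rodot K1 K2).f d = {v | ∃ u ∈ K1.f d, v ∈ K2.f (restr (le_of_eq h.symm) u)} :=
      dif_pos h
    obtain ⟨u, hu, hv⟩ : m ∈ {v | ∃ u ∈ K1.f d, v ∈ K2.f (restr (le_of_eq h.symm) u)} := by
      rw [← e]; exact hm
    have e2 := h2.restr_eq hv
    have e1 := h1.restr_eq hu
    funext t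
    have : m ⟨t.1, h2.1 (h ▸ h1.1 t.2)⟩ = u ⟨t.1, h1.1 t.2⟩ :=
      congrFun e2 ⟨t.1, h ▸ h1.1 t.2⟩
    rw [show restr hsub m t = m ⟨t.1, h2.1 (h ▸ h1.1 t.2)⟩ from rfl, this]
    exact congrFun e1 t

end Helpers
section Equations

open Classical

variable {Val Var : Type}

theorem rodot_f {K1 K2 : RKernel Val Var} (h : K1.ran = K2.dom) (d) :
    (rodot K1 K2).f d = {v | ∃ u ∈ K1.f d, v ∈ K2.f (restr (le_of_eq h.symm) u)} :=
  dif_pos h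

theorem roplus_comm' (K1 K2 : RKernel Val Var) : roplus K1 K2 = roplus K2 K1 :=
  RKernel.ext2 (Set.union_comm _ _) (Set.union_comm _ _) (fun m r =>
    ⟨fun h => ⟨h.2, h.1⟩, fun h => ⟨h.2, h.1⟩⟩)

theorem roplus_assoc' (K1 K2 K3 : RKernel Val Var) :
    roplus (roplus K1 K2) K3 = roplus K1 (roplus K2 K3) :=
  RKernel.ext2 (Set.union_assoc _ _ _) (Set.union_assoc _ _ _) (fun m r =>
    ⟨fun h => ⟨⟨h.1, h.2.1⟩, h.2.2⟩, fun h => ⟨h.1.1, h.1.2, h.2⟩⟩)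

theorem unit_oplus (R S : Set Var) :
    roplus (unitR Val Var R) (unitR Val Var S) = unitR Val Var (R ∪ S) := by
  refine RKernel.ext2 rfl rfl fun m r => ?_
  constructor
  · intro hmem
    have h : r = m := hmem
    rw [h]
    exact ⟨rfl, rfl⟩
  · rintro ⟨h1, h2⟩
    show r = m
    exact Mem.union_ext h1 h2

theorem roplus_unit_dom {K : RKernel Val Var} (hK : InMP K) :
    roplus K (unitR Val Var K.dom) = K := by
  refine RKernel.ext2 (Set.union_self _) (Set.union_eq_left.mpr hK.1)
    fun m r => ⟨fun h => ⟨h, ?_⟩, fun h => h.1⟩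
  exact hK.restr_eq h

theorem unit_roplus_dom {K : RKernel Val Var} (hK : InMP K) :
    roplus (unitR Val Var K.dom) K = K :=
  (roplus_comm' _ _).trans (roplus_unit_dom hK)

theorem roplus_unit_empty (K : RKernel Val Var) :
    roplus K (unitR Val Var ∅) = K := by
  refine RKernel.ext2 (Set.union_empty _) (Set.union_empty _)
    fun m r => ⟨fun h => ⟨h, ?_⟩, fun h => h.1⟩
  funext t
  exact absurd t.2 (Set.notMem_empty t.1)

theorem rodot_assoc' {a b c : RKernel Val Var} (hab : a.ran = b.dom) (hbc : b.ran = c.dom) :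
    rodot (rodot a b) c = rodot a (rodot b c) := by
  refine RKernel.ext2 rfl rfl fun m r => ?_
  rw [rodot_f (show a.ran = (rodot b c).dom from hab),
      rodot_f (show (rodot a b).ran = c.dom from hbc)]
  have key : ∀ w, w ∈ (rodot a b).f m ↔ ∃ u ∈ a.f m, w ∈ b.f (restr (le_of_eq hab.symm) u) :=
    fun w => Iff.of_eq (congrArg (w ∈ ·) (rodot_f hab m))
  simp only [Set.mem_setOf_eq, rodot_f hab, rodot_f hbc]
  constructor
  · rintro ⟨u, hu, w, hw, hr⟩
    exact ⟨w, (key w).2 ⟨u, hu, hw⟩, hr⟩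
  · rintro ⟨w, hw', hr⟩
    obtain ⟨u, hu, hw⟩ := (key w).1 hw'
    exact ⟨u, hu, w, hw, hr⟩

theorem rodot_unit_left' (K : RKernel Val Var) :
    rodot (unitR Val Var K.dom) K = K := by
  refine RKernel.ext2 rfl rfl fun m r => ?_
  rw [show (rodot (unitR Val Var K.dom) K).f m =
        dite _ (fun h => {v | ∃ u ∈ (unitR Val Var K.dom).f m,
          v ∈ K.f (restr (le_of_eq h.symm) u)}) (fun _ => ∅) from rfl,
      dif_pos (show (unitR Val Var K.dom).ran = K.dom from rfl)]
  constructor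
  · intro h
    exact ⟨m, rfl, h⟩
  · rintro ⟨u, hu, h⟩
    have : u = m := hu
    rw [this] at h
    exact h

theorem rodot_unit_right' (K : RKernel Val Var) :
    rodot K (unitR Val Var K.ran) = K := by
  refine RKernel.ext2 rfl rfl fun m r => ?_
  rw [show (rodot K (unitR Val Var K.ran)).f m =
        dite _ (fun h => {v | ∃ u ∈ K.f m,
          v ∈ (unitR Val Var K.ran).f (restr (le_of_eq h.symm) u)}) (fun _ => ∅) from rfl,
      dif_pos (show K.ran = (unitR Val Var K.ran).dom from rfl)]
  constructor
  · intro h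
    exact ⟨r, h, rfl⟩
  · rintro ⟨u, hu, h⟩
    have : r = u := h
    rw [this]
    exact hu

theorem rodot_unit_unit (S : Set Var) :
    rodot (unitR Val Var S) (unitR Val Var S) = unitR Val Var S :=
  rodot_unit_left' (unitR Val Var S)

theorem exchange_def_ac {a b c d : RKernel Val Var} (ha : InMP a) (hb : InMP b)
    (hc : InMP c) (hd : InMP d) (hab : a.ran = b.dom) (hcd : c.ran = d.dom)
    (H : b.ran ∩ d.ran = a.dom ∩ c.dom) : ROplusDef a c := by
  apply Set.Subset.antisymm
  · intro i hi
    have h1 : i ∈ b.dom := hab ▸ hi.1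
    have h2 : i ∈ d.dom := hcd ▸ hi.2
    have : i ∈ b.ran ∩ d.ran := ⟨hb.1 h1, hd.1 h2⟩
    rw [H] at this
    exact this
  · exact fun i hi => ⟨ha.1 hi.1, hc.1 hi.2⟩

theorem exchange_def_bd {a b c d : RKernel Val Var} (ha : InMP a) (hb : InMP b)
    (hc : InMP c) (hd : InMP d) (hab : a.ran = b.dom) (hcd : c.ran = d.dom)
    (H : b.ran ∩ d.ran = a.dom ∩ c.dom) : ROplusDef b d := by
  rw [ROplusDef, H]
  apply Set.Subset.antisymm
  · intro i hi
    exact ⟨hab ▸ (ha.1 hi.1 : i ∈ a.ran), hcd ▸ (hc.1 hi.2 : i ∈ c.ran)⟩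
  · intro i hi
    have h2 : i ∈ b.ran ∩ d.ran := ⟨hb.1 hi.1, hd.1 hi.2⟩
    rw [H] at h2
    exact h2

theorem exchange {a b c d : RKernel Val Var} (ha : InMP a) (hb : InMP b)
    (hc : InMP c) (hd : InMP d) (hab : a.ran = b.dom) (hcd : c.ran = d.dom)
    (H : b.ran ∩ d.ran = a.dom ∩ c.dom) :
    roplus (rodot a b) (rodot c d) = rodot (roplus a c) (roplus b d) := by
  have Dac : ROplusDef a c := exchange_def_ac ha hb hc hd hab hcd H
  have hac : (roplus a c).ran = (roplus b d).dom := by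
    show a.ran ∪ c.ran = b.dom ∪ d.dom
    rw [hab, hcd]
  refine RKernel.ext2 rfl rfl fun m r => ?_
  rw [rodot_f hac]
  constructor
  · rintro ⟨u, ⟨hu1, hu2⟩, hv1, hv2⟩
    refine ⟨?_, ?_⟩
    · rw [rodot_f hab]
      exact ⟨restr Set.subset_union_left u, hu1, hv1⟩
    · rw [rodot_f hcd]
      exact ⟨restr Set.subset_union_right u, hu2, hv2⟩
  · rintro ⟨h1, h2⟩
    rw [rodot_f hab] at h1
    rw [rodot_f hcd] at h2
    obtain ⟨u1, hu1, hb1⟩ := h1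
    obtain ⟨u2, hu2, hd1⟩ := h2
    have hag : ∀ i (p1 : i ∈ a.ran) (p2 : i ∈ c.ran), u1 ⟨i, p1⟩ = u2 ⟨i, p2⟩ := by
      intro i p1 p2
      have hi : i ∈ a.dom ∩ c.dom := Dac ▸ (⟨p1, p2⟩ : i ∈ a.ran ∩ c.ran)
      have e1 : u1 ⟨i, p1⟩ = m ⟨i, Or.inl hi.1⟩ := congrFun (ha.restr_eq hu1) ⟨i, hi.1⟩
      have e2 : u2 ⟨i, p2⟩ = m ⟨i, Or.inr hi.2⟩ := congrFun (hc.restr_eq hu2) ⟨i, hi.2⟩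
      rw [e1, e2]
    refine ⟨combine u1 u2, ⟨?_, ?_⟩, ?_, ?_⟩
    · rw [show restr Set.subset_union_left (combine u1 u2) = u1 from combine_restr_left u1 u2]
      exact hu1
    · rw [show restr Set.subset_union_right (combine u1 u2) = u2 from
        combine_restr_right u1 u2 hag]
      exact hu2
    · rw [← combine_restr_left u1 u2] at hb1
      exact hb1
    · rw [← combine_restr_right u1 u2 hag] at hd1
      exact hd1

end Equations
section Pre

variable {Val Var : Type}

theorem rle_refl' {x : RKernel Val Var} (hx : InMP x) : rle x x := by
  refine ⟨x.dom, unitR Val Var x.ran, unitR_InMP _, ?_, ?_, ?_⟩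
  · show x.ran ∩ x.dom = x.dom ∩ x.dom
    rw [Set.inter_self, Set.inter_eq_right.mpr hx.1]
  · show x.ran ∪ x.dom = x.ran
    exact Set.union_eq_left.mpr hx.1
  · rw [roplus_unit_dom hx, rodot_unit_right']

theorem rle_trans' {x y z : RKernel Val Var} (hx : InMP x) (hxy : rle x y) (hyz : rle y z) :
    rle x z := by
  obtain ⟨R, h, hh, Dx, Ex, rfl⟩ := hxy
  obtain ⟨S, h', hh', Dy, Ey, rfl⟩ := hyz
  have Dx' : x.ran ∩ R = x.dom ∩ R := Dx
  have Dy' : h.ran ∩ S = (x.dom ∪ R) ∩ S := Dy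
  have Ex' : x.ran ∪ R = h.dom := Ex
  have Ey' : h.ran ∪ S = h'.dom := Ey
  have hdsub : x.dom ∪ R ⊆ h.dom := by
    intro i hi
    rw [← Ex']
    rcases hi with a | b
    · exact Or.inl (hx.1 a)
    · exact Or.inr b
  have D1 : ROplusDef h (unitR Val Var S) := by
    show h.ran ∩ S = h.dom ∩ S
    apply Set.Subset.antisymm
    · intro i hi
      have h2 : i ∈ (x.dom ∪ R) ∩ S := Dy' ▸ hi
      exact ⟨hdsub h2.1, h2.2⟩
    · exact fun i hi => ⟨hh.1 hi.1, hi.2⟩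
  have hinmp : InMP (rodot (roplus h (unitR Val Var S)) h') :=
    rodot_InMP (roplus_InMP hh (unitR_InMP S) D1) hh' Ey'
  have D2 : ROplusDef x (unitR Val Var (R ∪ S)) := by
    show x.ran ∩ (R ∪ S) = x.dom ∩ (R ∪ S)
    apply Set.Subset.antisymm
    · rintro i ⟨hir, hiRS⟩
      rcases hiRS with hiR | hiS
      · have h2 : i ∈ x.dom ∩ R := Dx' ▸ (⟨hir, hiR⟩ : i ∈ x.ran ∩ R)
        exact ⟨h2.1, Or.inl hiR⟩
      · have hhr : i ∈ h.ran := hh.1 (Ex' ▸ (Or.inl hir : i ∈ x.ran ∪ R))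
        have h2 : i ∈ (x.dom ∪ R) ∩ S := Dy' ▸ (⟨hhr, hiS⟩ : i ∈ h.ran ∩ S)
        rcases h2.1 with hd | hR
        · exact ⟨hd, Or.inr hiS⟩
        · have h3 : i ∈ x.dom ∩ R := Dx' ▸ (⟨hir, hR⟩ : i ∈ x.ran ∩ R)
          exact ⟨h3.1, Or.inr hiS⟩
    · exact fun i hi => ⟨hx.1 hi.1, hi.2⟩
  have E2 : (roplus x (unitR Val Var (R ∪ S))).ran =
      (rodot (roplus h (unitR Val Var S)) h').dom := by
    show x.ran ∪ (R ∪ S) = h.dom ∪ S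
    rw [← Ex', Set.union_assoc]
  refine ⟨R ∪ S, rodot (roplus h (unitR Val Var S)) h', hinmp, D2, E2, ?_⟩
  calc rodot (roplus (rodot (roplus x (unitR Val Var R)) h) (unitR Val Var S)) h'
      = rodot (roplus (rodot (roplus x (unitR Val Var R)) h)
          (rodot (unitR Val Var S) (unitR Val Var S))) h' := by rw [rodot_unit_unit]
    _ = rodot (rodot (roplus (roplus x (unitR Val Var R)) (unitR Val Var S))
          (roplus h (unitR Val Var S))) h' := by
        rw [exchange (roplus_InMP hx (unitR_InMP R) Dx) hh (unitR_InMP S) (unitR_InMP S)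
          Ex rfl Dy']
    _ = rodot (rodot (roplus x (unitR Val Var (R ∪ S))) (roplus h (unitR Val Var S))) h' := by
        rw [roplus_assoc', unit_oplus]
    _ = rodot (roplus x (unitR Val Var (R ∪ S))) (rodot (roplus h (unitR Val Var S)) h') :=
        rodot_assoc' E2 Ey'

end Pre

theorem MP_isDIBIFrame' (Val Var : Type) :
    IsDIBIFrame (fun x y : MP Val Var => rle x.1 y.1) mpOplus mpOdot
      (Set.univ : Set (MP Val Var)) := by
  constructor
  -- le_refl
  · exact fun x => rle_refl' x.2
  -- le_trans
  · exact fun x y z hxy hyz => rle_trans' x.2 hxy hyz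
  -- oplus_down
  · rintro x y z x' y' ⟨Dxy, hzz⟩ ⟨R, h, hh, DxR, ExR, hxe⟩ ⟨S, h', hh', DyS, EyS, hye⟩
    have DxR' : x'.1.ran ∩ R = x'.1.dom ∩ R := DxR
    have DyS' : y'.1.ran ∩ S = y'.1.dom ∩ S := DyS
    have ExR' : x'.1.ran ∪ R = h.dom := ExR
    have EyS' : y'.1.ran ∪ S = h'.dom := EyS
    have Dxy' : h.ran ∩ h'.ran = (x'.1.dom ∪ R) ∩ (y'.1.dom ∪ S) := by
      have h2 := Dxy; rw [hxe, hye] at h2; exact h2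
    have sx : x'.1.ran ⊆ h.dom := fun i hi => ExR' ▸ (Or.inl hi : _ ∈ x'.1.ran ∪ R)
    have sR : R ⊆ h.dom := fun i hi => ExR' ▸ (Or.inr hi : _ ∈ x'.1.ran ∪ R)
    have sy : y'.1.ran ⊆ h'.dom := fun i hi => EyS' ▸ (Or.inl hi : _ ∈ y'.1.ran ∪ S)
    have sS : S ⊆ h'.dom := fun i hi => EyS' ▸ (Or.inr hi : _ ∈ y'.1.ran ∪ S)
    have memx : ∀ i, i ∈ x'.1.ran → i ∈ R → i ∈ x'.1.dom := fun i h1 h2 =>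
      (DxR' ▸ (⟨h1, h2⟩ : i ∈ x'.1.ran ∩ R) : i ∈ x'.1.dom ∩ R).1
    have memy : ∀ i, i ∈ y'.1.ran → i ∈ S → i ∈ y'.1.dom := fun i h1 h2 =>
      (DyS' ▸ (⟨h1, h2⟩ : i ∈ y'.1.ran ∩ S) : i ∈ y'.1.dom ∩ S).1
    have key : ∀ i, i ∈ h.ran → i ∈ h'.ran → i ∈ x'.1.dom ∪ R := by
      intro i h1 h2
      have h3 : i ∈ h.ran ∩ h'.ran := ⟨h1, h2⟩
      rw [Dxy'] at h3
      exact h3.1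
    have key' : ∀ i, i ∈ h.ran → i ∈ h'.ran → i ∈ y'.1.dom ∪ S := by
      intro i h1 h2
      have h3 : i ∈ h.ran ∩ h'.ran := ⟨h1, h2⟩
      rw [Dxy'] at h3
      exact h3.2
    have toxd : ∀ i, i ∈ x'.1.ran → i ∈ h.ran → i ∈ h'.ran → i ∈ x'.1.dom := by
      intro i hx1 h1 h2
      rcases key i h1 h2 with hd | hR
      · exact hd
      · exact memx i hx1 hR
    have toyd : ∀ i, i ∈ y'.1.ran → i ∈ h.ran → i ∈ h'.ran → i ∈ y'.1.dom := by
      intro i hy1 h1 h2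
      rcases key' i h1 h2 with hd | hS
      · exact hd
      · exact memy i hy1 hS
    have Dx'y' : ROplusDef x'.1 y'.1 := by
      apply Set.Subset.antisymm
      · rintro i ⟨h1, h2⟩
        have hh1 : i ∈ h.ran := hh.1 (sx h1)
        have hh2 : i ∈ h'.ran := hh'.1 (sy h2)
        exact ⟨toxd i h1 hh1 hh2, toyd i h2 hh1 hh2⟩
      · exact fun i hi => ⟨x'.2.1 hi.1, y'.2.1 hi.2⟩
    have Dhh' : ROplusDef h h' := by
      apply Set.Subset.antisymm
      · rintro i ⟨h1, h2⟩
        constructor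
        · rcases key i h1 h2 with hd | hR
          · exact sx (x'.2.1 hd)
          · exact sR hR
        · rcases key' i h1 h2 with hd | hS
          · exact sy (y'.2.1 hd)
          · exact sS hS
      · exact fun i hi => ⟨hh.1 hi.1, hh'.1 hi.2⟩
    have D_RS : ROplusDef (roplus x'.1 y'.1) (unitR Val Var (R ∪ S)) := by
      show (x'.1.ran ∪ y'.1.ran) ∩ (R ∪ S) = (x'.1.dom ∪ y'.1.dom) ∩ (R ∪ S)
      apply Set.Subset.antisymm
      · rintro i ⟨h1, h2⟩
        refine ⟨?_, h2⟩
        rcases h1 with hr | hr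
        · rcases h2 with hR | hS
          · exact Or.inl (memx i hr hR)
          · exact Or.inl (toxd i hr (hh.1 (sx hr)) (hh'.1 (sS hS)))
        · rcases h2 with hR | hS
          · exact Or.inr (toyd i hr (hh.1 (sR hR)) (hh'.1 (sy hr)))
          · exact Or.inr (memy i hr hS)
      · rintro i ⟨h1, h2⟩
        refine ⟨?_, h2⟩
        rcases h1 with hd | hd
        · exact Or.inl (x'.2.1 hd)
        · exact Or.inr (y'.2.1 hd)
    have E_RS : (roplus (roplus x'.1 y'.1) (unitR Val Var (R ∪ S))).ran =
        (roplus h h').dom := by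
      show (x'.1.ran ∪ y'.1.ran) ∪ (R ∪ S) = h.dom ∪ h'.dom
      rw [← ExR', ← EyS']
      ext i
      simp only [Set.mem_union]
      tauto
    have keq : roplus (roplus x'.1 (unitR Val Var R)) (roplus y'.1 (unitR Val Var S)) =
        roplus (roplus x'.1 y'.1) (unitR Val Var (R ∪ S)) := by
      rw [roplus_assoc' x'.1 (unitR Val Var R) (roplus y'.1 (unitR Val Var S)),
        ← roplus_assoc' (unitR Val Var R) y'.1 (unitR Val Var S),
        roplus_comm' (unitR Val Var R) y'.1,
        roplus_assoc' y'.1 (unitR Val Var R) (unitR Val Var S),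
        unit_oplus R S,
        ← roplus_assoc' x'.1 y'.1 (unitR Val Var (R ∪ S))]
    refine ⟨⟨roplus x'.1 y'.1, roplus_InMP x'.2 y'.2 Dx'y'⟩,
      ⟨R ∪ S, roplus h h', roplus_InMP hh hh' Dhh', D_RS, E_RS, ?_⟩, Dx'y', rfl⟩
    calc z.1 = roplus (rodot (roplus x'.1 (unitR Val Var R)) h)
          (rodot (roplus y'.1 (unitR Val Var S)) h') := by rw [hzz, hxe, hye]
      _ = rodot (roplus (roplus x'.1 (unitR Val Var R)) (roplus y'.1 (unitR Val Var S)))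
            (roplus h h') :=
          exchange (roplus_InMP x'.2 (unitR_InMP R) DxR) hh
            (roplus_InMP y'.2 (unitR_InMP S) DyS) hh' ExR EyS Dxy'
      _ = rodot (roplus (roplus x'.1 y'.1) (unitR Val Var (R ∪ S))) (roplus h h') := by
          rw [keq]
  -- odot_up
  · rintro x y z z' ⟨hxy, hzxy⟩ ⟨R, h, hh, Dz, Ez, hz'⟩
    have Dz' : y.1.ran ∩ R = x.1.dom ∩ R := by
      have h2 := Dz; rw [hzxy] at h2; exact h2
    have Ez' : y.1.ran ∪ R = h.dom := by
      have h2 := Ez; rw [hzxy] at h2; exact h2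
    have DxR : ROplusDef x.1 (unitR Val Var R) := by
      show x.1.ran ∩ R = x.1.dom ∩ R
      apply Set.Subset.antisymm
      · rintro i ⟨h1, h2⟩
        have h1' : i ∈ y.1.ran := y.2.1 (hxy ▸ h1)
        exact Dz' ▸ (⟨h1', h2⟩ : i ∈ y.1.ran ∩ R)
      · exact fun i hi => ⟨x.2.1 hi.1, hi.2⟩
    have DyR : ROplusDef y.1 (unitR Val Var R) := by
      show y.1.ran ∩ R = y.1.dom ∩ R
      apply Set.Subset.antisymm
      · intro i hi
        have h2 : i ∈ x.1.dom ∩ R := Dz' ▸ hi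
        exact ⟨hxy ▸ x.2.1 h2.1, h2.2⟩
      · exact fun i hi => ⟨y.2.1 hi.1, hi.2⟩
    refine ⟨⟨roplus x.1 (unitR Val Var R), roplus_InMP x.2 (unitR_InMP R) DxR⟩,
      ⟨rodot (roplus y.1 (unitR Val Var R)) h,
        rodot_InMP (roplus_InMP y.2 (unitR_InMP R) DyR) hh Ez'⟩, ?_, ?_, ?_, ?_⟩
    · exact ⟨R, unitR Val Var (x.1.ran ∪ R), unitR_InMP _, DxR, rfl,
        (rodot_unit_right' _).symm⟩
    · exact ⟨R, h, hh, DyR, Ez', rfl⟩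
    · show x.1.ran ∪ R = y.1.dom ∪ R
      rw [hxy]
    · calc z'.1 = rodot (roplus z.1 (unitR Val Var R)) h := hz'
        _ = rodot (roplus (rodot x.1 y.1) (rodot (unitR Val Var R) (unitR Val Var R))) h := by
            rw [rodot_unit_unit, ← hzxy]
        _ = rodot (rodot (roplus x.1 (unitR Val Var R)) (roplus y.1 (unitR Val Var R))) h := by
            rw [exchange x.2 y.2 (unitR_InMP R) (unitR_InMP R) hxy rfl Dz']
        _ = rodot (roplus x.1 (unitR Val Var R)) (rodot (roplus y.1 (unitR Val Var R)) h) :=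
            rodot_assoc' (by show x.1.ran ∪ R = y.1.dom ∪ R; rw [hxy]) Ez'
  -- oplus_comm
  · rintro x y z ⟨D, hzz⟩
    refine ⟨?_, ?_⟩
    · show y.1.ran ∩ x.1.ran = y.1.dom ∩ x.1.dom
      rw [Set.inter_comm y.1.ran x.1.ran, D, Set.inter_comm x.1.dom y.1.dom]
    · rw [hzz, roplus_comm' x.1 y.1]
  -- oplus_assoc
  · rintro x y z t w ⟨Dtz, hwt⟩ ⟨Dxy, htxy⟩
    have Dtz' : (x.1.ran ∪ y.1.ran) ∩ z.1.ran = (x.1.dom ∪ y.1.dom) ∩ z.1.dom := by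
      have h2 := Dtz; rw [htxy] at h2; exact h2
    have Dxy' : x.1.ran ∩ y.1.ran = x.1.dom ∩ y.1.dom := Dxy
    have Dyz : ROplusDef y.1 z.1 := by
      apply Set.Subset.antisymm
      · rintro i ⟨h1, h2⟩
        have h3 : i ∈ (x.1.ran ∪ y.1.ran) ∩ z.1.ran := ⟨Or.inr h1, h2⟩
        rw [Dtz'] at h3
        refine ⟨?_, h3.2⟩
        rcases h3.1 with hxd | hyd
        · have h4 : i ∈ x.1.ran ∩ y.1.ran := ⟨x.2.1 hxd, h1⟩
          rw [Dxy'] at h4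
          exact h4.2
        · exact hyd
      · exact fun i hi => ⟨y.2.1 hi.1, z.2.1 hi.2⟩
    have Dxyz : ROplusDef x.1 (roplus y.1 z.1) := by
      show x.1.ran ∩ (y.1.ran ∪ z.1.ran) = x.1.dom ∩ (y.1.dom ∪ z.1.dom)
      apply Set.Subset.antisymm
      · rintro i ⟨h1, h2⟩
        rcases h2 with hy | hz2
        · have h3 : i ∈ x.1.ran ∩ y.1.ran := ⟨h1, hy⟩
          rw [Dxy'] at h3
          exact ⟨h3.1, Or.inl h3.2⟩
        · have h3 : i ∈ (x.1.ran ∪ y.1.ran) ∩ z.1.ran := ⟨Or.inl h1, hz2⟩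
          rw [Dtz'] at h3
          rcases h3.1 with hxd | hyd
          · exact ⟨hxd, Or.inr h3.2⟩
          · have h4 : i ∈ x.1.ran ∩ y.1.ran := ⟨h1, y.2.1 hyd⟩
            rw [Dxy'] at h4
            exact ⟨h4.1, Or.inr h3.2⟩
      · rintro i ⟨h1, h2⟩
        refine ⟨x.2.1 h1, ?_⟩
        rcases h2 with hd | hd
        · exact Or.inl (y.2.1 hd)
        · exact Or.inr (z.2.1 hd)
    refine ⟨⟨roplus y.1 z.1, roplus_InMP y.2 z.2 Dyz⟩, ⟨Dyz, rfl⟩, Dxyz, ?_⟩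
    rw [hwt, htxy, roplus_assoc']
  -- oplus_unit_exists
  · intro x
    refine ⟨⟨unitR Val Var x.1.dom, unitR_InMP _⟩, trivial, ?_, (unit_roplus_dom x.2).symm⟩
    show x.1.dom ∩ x.1.ran = x.1.dom ∩ x.1.dom
    rw [Set.inter_eq_left.mpr x.2.1, Set.inter_self]
  -- oplus_unit_coherence
  · rintro e x y - ⟨D, hxe⟩
    have D' : y.1.ran ∩ e.1.ran = y.1.dom ∩ e.1.dom := D
    have D1 : ROplusDef y.1 (unitR Val Var e.1.dom) := by
      show y.1.ran ∩ e.1.dom = y.1.dom ∩ e.1.dom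
      apply Set.Subset.antisymm
      · rintro i ⟨h1, h2⟩
        have h3 : i ∈ y.1.ran ∩ e.1.ran := ⟨h1, e.2.1 h2⟩
        rw [D'] at h3
        exact ⟨h3.1, h2⟩
      · exact fun i hi => ⟨y.2.1 hi.1, hi.2⟩
    have Dur : ROplusDef (unitR Val Var y.1.ran) e.1 := by
      show y.1.ran ∩ e.1.ran = y.1.ran ∩ e.1.dom
      apply Set.Subset.antisymm
      · intro i hi
        have h3 : i ∈ y.1.ran ∩ e.1.ran := hi
        rw [D'] at h3
        exact ⟨y.2.1 h3.1, h3.2⟩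
      · exact fun i hi => ⟨hi.1, e.2.1 hi.2⟩
    refine ⟨e.1.dom, roplus (unitR Val Var y.1.ran) e.1,
      roplus_InMP (unitR_InMP _) e.2 Dur, D1, rfl, ?_⟩
    calc x.1 = roplus y.1 e.1 := hxe
      _ = roplus (rodot y.1 (unitR Val Var y.1.ran)) (rodot (unitR Val Var e.1.dom) e.1) := by
          rw [rodot_unit_right', rodot_unit_left']
      _ = rodot (roplus y.1 (unitR Val Var e.1.dom)) (roplus (unitR Val Var y.1.ran) e.1) :=
          exchange y.2 (unitR_InMP _) (unitR_InMP _) e.2 rfl rfl D'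
  -- odot_assoc
  · intro x y z w
    constructor
    · rintro ⟨t, ⟨htz, hwt⟩, ⟨hxy, htxy⟩⟩
      have hyz : y.1.ran = z.1.dom := by
        have h2 := htz; rw [htxy] at h2; exact h2
      refine ⟨⟨rodot y.1 z.1, rodot_InMP y.2 z.2 hyz⟩, ⟨hyz, rfl⟩, hxy, ?_⟩
      rw [hwt, htxy, rodot_assoc' hxy hyz]
    · rintro ⟨s, ⟨hyz, hsyz⟩, ⟨hxs, hwxs⟩⟩
      have hxy : x.1.ran = y.1.dom := by
        have h2 := hxs; rw [hsyz] at h2; exact h2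
      refine ⟨⟨rodot x.1 y.1, rodot_InMP x.2 y.2 hxy⟩, ⟨hyz, ?_⟩, hxy, rfl⟩
      rw [hwxs, hsyz, ← rodot_assoc' hxy hyz]
  -- odot_unit_exists_left
  · intro x
    exact ⟨⟨unitR Val Var x.1.dom, unitR_InMP _⟩, trivial, rfl, (rodot_unit_left' x.1).symm⟩
  -- odot_unit_exists_right
  · intro x
    exact ⟨⟨unitR Val Var x.1.ran, unitR_InMP _⟩, trivial, rfl, (rodot_unit_right' x.1).symm⟩
  -- odot_coherence_right
  · rintro e x y - ⟨hye, hxe⟩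
    refine ⟨∅, e.1, e.2, ?_, ?_, ?_⟩
    · show y.1.ran ∩ ∅ = y.1.dom ∩ ∅
      simp
    · show y.1.ran ∪ ∅ = e.1.dom
      rw [Set.union_empty]; exact hye
    · rw [roplus_unit_empty]; exact hxe
  -- unit_closure
  · intro e e' _ _
    trivial
  -- rev_exchange
  · rintro x y z y1 y2 z1 z2 ⟨Dyz, hxyz⟩ ⟨hy12, hy⟩ ⟨hz12, hz⟩
    have H : y2.1.ran ∩ z2.1.ran = y1.1.dom ∩ z1.1.dom := by
      have h2 := Dyz; rw [hy, hz] at h2; exact h2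
    have D13 : ROplusDef y1.1 z1.1 := exchange_def_ac y1.2 y2.2 z1.2 z2.2 hy12 hz12 H
    have D24 : ROplusDef y2.1 z2.1 := exchange_def_bd y1.2 y2.2 z1.2 z2.2 hy12 hz12 H
    refine ⟨⟨roplus y1.1 z1.1, roplus_InMP y1.2 z1.2 D13⟩,
      ⟨roplus y2.1 z2.1, roplus_InMP y2.2 z2.2 D24⟩, ⟨D13, rfl⟩, ⟨D24, rfl⟩, ?_, ?_⟩
    · show y1.1.ran ∪ z1.1.ran = y2.1.dom ∪ z2.1.dom
      rw [hy12, hz12]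
    · rw [hxyz, hy, hz]
      exact exchange y1.2 y2.2 z1.2 z2.2 hy12 hz12 H

/-- **The relational model is a DIBI frame.** The structure `(M^P, ⊑, ⊕, ⊙, M^P)`
of input-preserving powerset kernels, with parallel and sequential composition and
with every state a unit, satisfies all twelve DIBI frame conditions (in particular,
`⊑` is a preorder on `M^P`). -/
theorem MP_isDIBIFrame (Val Var : Type) [Fintype Val] [Fintype Var] :
    IsDIBIFrame (fun x y : MP Val Var => rle x.1 y.1) mpOplus mpOdot
      (Set.univ : Set (MP Val Var)) := by
  exact MP_isDIBIFrame' Val Var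
end

section
/- Disintegration for Markov kernels: let f, f1, f2 be input-preserving Markov kernels with f1 ⊙ f2 defined (range(f1) = dom(f2)). If f = f1 ⊙ f2, then π_{range(f1)} f = f1. Conversely, if f is an input-preserving Markov kernel, f1 is an input-preserving Markov kernel with dom(f1) = dom(f) and range(f1) ⊆ range(f), and π_{range(f1)} f = f1, then there exists an input-preserving Markov kernel g : Mem(range(f1)) → D(Mem(range(f))) with f = f1 ⊙ g. -/
open scoped ENNReal

/-- A (sub)distribution as a mass function into `ℝ≥0∞`; `IsDist μ` says the total
mass is `1`, i.e. `μ` is a (finitely supported, as all types involved are finite)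
probability distribution. -/
def IsDist {α : Type*} (μ : α → ℝ≥0∞) : Prop := ∑' a, μ a = 1

open Classical in
/-- Marginalization of a mass function on memories over `S` to memories over `T`
(intended for `T ⊆ S`). -/
noncomputable def marg {Val Var : Type} {S : Set Var} (μ : Mem Val Var S → ℝ≥0∞)
    (T : Set Var) : Mem Val Var T → ℝ≥0∞ :=
  fun r => ∑' m : Mem Val Var S, if Agree m r then μ m else 0

open Classical in
/-- The point mass (Dirac distribution) at a memory. -/
noncomputable def dirac {Val Var : Type} {S : Set Var} (d : Mem Val Var S) :
    Mem Val Var S → ℝ≥0∞ :=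
  fun r => if r = d then 1 else 0

/-- A Markov-kernel-shaped map on memories, with explicit domain and range. -/
structure PKernel (Val Var : Type) where
  dom : Set Var
  ran : Set Var
  f : Mem Val Var dom → Mem Val Var ran → ℝ≥0∞

/-- Membership in `M^D`: `K` is a Markov kernel (every output is a probability
distribution) that preserves its input to its output (the marginal of `K.f d`
on the domain is the point mass at `d`). -/
def InMD {Val Var : Type} (K : PKernel Val Var) : Prop :=
  K.dom ⊆ K.ran ∧ (∀ d, IsDist (K.f d)) ∧ (∀ d, marg (K.f d) K.dom = dirac d)

/-- Definedness condition for parallel composition. -/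
def OplusDef {Val Var : Type} (K1 K2 : PKernel Val Var) : Prop :=
  K1.ran ∩ K2.ran = K1.dom ∩ K2.dom

/-- Parallel composition of kernels. -/
noncomputable def poplus {Val Var : Type} (K1 K2 : PKernel Val Var) : PKernel Val Var where
  dom := K1.dom ∪ K2.dom
  ran := K1.ran ∪ K2.ran
  f := fun d m =>
    K1.f (restr Set.subset_union_left d) (restr Set.subset_union_left m) *
    K2.f (restr Set.subset_union_right d) (restr Set.subset_union_right m)

open Classical in
/-- Sequential (Kleisli) composition of kernels, defined when
`K1.ran = K2.dom` (and returning the zero kernel otherwise). -/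
noncomputable def podot {Val Var : Type} (K1 K2 : PKernel Val Var) : PKernel Val Var where
  dom := K1.dom
  ran := K2.ran
  f := fun d m =>
    if h : K1.ran = K2.dom then
      ∑' m' : Mem Val Var K1.ran, K1.f d m' * K2.f (restr (le_of_eq h.symm) m') m
    else 0

open Classical in
/-- The identity (unit) kernel on memories over `R`. -/
noncomputable def unitK (Val Var : Type) (R : Set Var) : PKernel Val Var where
  dom := R
  ran := R
  f := fun d => dirac d

/-- The preorder on kernels: `f ⊑ g` iff `g = (f ⊕ unit_R) ⊙ h` for some set of
variables `R` and some `h ∈ M^D` (with both compositions defined). -/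
def ple {Val Var : Type} (K1 K2 : PKernel Val Var) : Prop :=
  ∃ (R : Set Var) (h : PKernel Val Var), InMD h ∧
    OplusDef K1 (unitK Val Var R) ∧
    (poplus K1 (unitK Val Var R)).ran = h.dom ∧
    K2 = podot (poplus K1 (unitK Val Var R)) h

/-- Marginalization of a kernel to a smaller range. -/
noncomputable def margK {Val Var : Type} (K : PKernel Val Var) (T : Set Var) :
    PKernel Val Var where
  dom := K.dom
  ran := T
  f := fun d => marg (K.f d) T


section Helpers

open Classical

variable {Val Var : Type}

lemma agree_iff_restr {S T : Set Var} (h : T ⊆ S) (m : Mem Val Var S) (r : Mem Val Var T) :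
    Agree m r ↔ restr h m = r := by
  constructor
  · intro ha; funext t; exact ha t.1 (h t.2) t.2
  · intro he i h1 h2; rw [← he]; rfl

lemma marg_eq_restr {S T : Set Var} (h : T ⊆ S) (μ : Mem Val Var S → ℝ≥0∞) (r : Mem Val Var T) :
    marg μ T r = ∑' m : Mem Val Var S, if restr h m = r then μ m else 0 := by
  unfold marg
  exact tsum_congr fun m => by simp only [agree_iff_restr h]

lemma le_marg {S T : Set Var} (h : T ⊆ S) (μ : Mem Val Var S → ℝ≥0∞) (m : Mem Val Var S) :
    μ m ≤ marg μ T (restr h m) := by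
  rw [marg_eq_restr h]
  calc μ m = if restr h m = restr h m then μ m else 0 := by rw [if_pos rfl]
    _ ≤ _ := ENNReal.le_tsum m

lemma mass_le_one {S : Set Var} {μ : Mem Val Var S → ℝ≥0∞} (h : IsDist μ) (m : Mem Val Var S) :
    μ m ≤ 1 := h ▸ ENNReal.le_tsum m

lemma pres_restr {D R : Set Var} (hDR : D ⊆ R) {F : Mem Val Var D → Mem Val Var R → ℝ≥0∞}
    (hpres : ∀ d, marg (F d) D = dirac d) {d : Mem Val Var D} {r : Mem Val Var R}
    (hne : F d r ≠ 0) : restr hDR r = d := by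
  by_contra hc
  apply hne
  have h1 : marg (F d) D (restr hDR r) = 0 := by
    rw [hpres d]; unfold dirac; rw [if_neg hc]
  have h2 := le_marg hDR (F d) r
  rw [h1] at h2
  exact le_antisymm h2 zero_le

lemma isDist_dirac {S : Set Var} (e : Mem Val Var S) : IsDist (dirac e) := by
  unfold IsDist dirac
  exact tsum_ite_eq e 1

end Helpers

/-- **Disintegration for Markov kernels.**
(i) If `f1, f2 ∈ M^D`, `f1 ⊙ f2` is defined (`range(f1) = dom(f2)`) and
`f = f1 ⊙ f2`, then `π_{range(f1)} f = f1`.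
(ii) Conversely, if `f, f1 ∈ M^D` with `dom(f1) = dom(f)`, `range(f1) ⊆ range(f)`
and `π_{range(f1)} f = f1`, then there is `g ∈ M^D` with
`g : Mem(range(f1)) → D(Mem(range(f)))` and `f = f1 ⊙ g`. -/
theorem MD_disintegration {Val Var : Type} [Fintype Val] [Fintype Var] :
    (∀ f f1 f2 : PKernel Val Var, InMD f → InMD f1 → InMD f2 →
        f1.ran = f2.dom → f = podot f1 f2 → margK f f1.ran = f1) ∧
    (∀ f f1 : PKernel Val Var, InMD f → InMD f1 →
        f1.dom = f.dom → f1.ran ⊆ f.ran → margK f f1.ran = f1 →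
        ∃ g : PKernel Val Var, InMD g ∧ g.dom = f1.ran ∧ g.ran = f.ran ∧
          f = podot f1 g) := by
  classical
  constructor
  · -- Part (i)
    rintro f f1 f2 hf h1 h2 hE hc
    subst hc
    obtain ⟨D1, R1, F1⟩ := f1
    obtain ⟨D2, R2, F2⟩ := f2
    obtain rfl : R1 = D2 := hE
    obtain ⟨hsub2, hdist2, hpres2⟩ := h2
    change R1 ⊆ R2 at hsub2
    have key : (podot ⟨D1, R1, F1⟩ ⟨R1, R2, F2⟩ : PKernel Val Var).f =
        fun d m => ∑' m' : Mem Val Var R1, F1 d m' * F2 m' m := by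
      funext d m
      exact dif_pos rfl
    show (⟨D1, R1, fun d => marg ((podot ⟨D1, R1, F1⟩ ⟨R1, R2, F2⟩ : PKernel Val Var).f d) R1⟩ :
        PKernel Val Var) = ⟨D1, R1, F1⟩
    refine congrArg (PKernel.mk D1 R1) ?_
    funext d r
    rw [marg_eq_restr (S := (podot ⟨D1, R1, F1⟩ ⟨R1, R2, F2⟩ : PKernel Val Var).ran) hsub2]
    change ∑' m : Mem Val Var R2, (if restr hsub2 m = r then
      (podot ⟨D1, R1, F1⟩ ⟨R1, R2, F2⟩ : PKernel Val Var).f d m else 0) = F1 d r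
    rw [key]
    beta_reduce
    have step1 : ∑' m : Mem Val Var R2,
        (if restr hsub2 m = r then ∑' m' : Mem Val Var R1, F1 d m' * F2 m' m else 0)
        = ∑' m' : Mem Val Var R1, F1 d m' * marg (F2 m') R1 r := by
      rw [show (∑' m : Mem Val Var R2,
            (if restr hsub2 m = r then ∑' m' : Mem Val Var R1, F1 d m' * F2 m' m else 0))
          = ∑' (m : Mem Val Var R2) (m' : Mem Val Var R1),
            (if restr hsub2 m = r then F1 d m' * F2 m' m else 0) from
        tsum_congr fun m => by split_ifs with h <;> simp]
      rw [ENNReal.tsum_comm]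
      refine tsum_congr fun m' => ?_
      rw [marg_eq_restr hsub2, ← ENNReal.tsum_mul_left]
      refine tsum_congr fun m => ?_
      split_ifs with h
      · rfl
      · rw [mul_zero]
    rw [step1]
    rw [tsum_eq_single r (fun m' hm' => by
      have : marg (F2 m') R1 r = 0 := by
        rw [hpres2 m']; unfold dirac; rw [if_neg (fun h => hm' h.symm)]
      rw [this, mul_zero])]
    have : marg (F2 r) R1 r = 1 := by
      rw [hpres2 r]; unfold dirac; rw [if_pos rfl]
    rw [this, mul_one]
  · -- Part (ii)
    rintro f f1 hf h1 hd hsub hm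
    obtain ⟨Df, Rf, F⟩ := f
    obtain ⟨D1, R1, F1⟩ := f1
    obtain rfl : D1 = Df := hd
    obtain ⟨hDRf, hdist, hpres⟩ := hf
    obtain ⟨hDR1, hdist1, hpres1⟩ := h1
    change D1 ⊆ Rf at hDRf
    change D1 ⊆ R1 at hDR1
    change R1 ⊆ Rf at hsub
    have hm' : (⟨D1, R1, fun d => marg (F d) R1⟩ : PKernel Val Var) = ⟨D1, R1, F1⟩ := hm
    injection hm' with _ _ h3
    have hF1 : ∀ d r, F1 d r = marg (F d) R1 r := by
      intro d r
      rw [← h3]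
    have hne : Mem Val Var D1 → Nonempty (Mem Val Var Rf) := by
      intro d
      by_contra hc
      have hie : IsEmpty (Mem Val Var Rf) := not_nonempty_iff.mp hc
      have hh := hdist d
      rw [IsDist, tsum_empty] at hh
      exact zero_ne_one hh
    classical
    set G : Mem Val Var R1 → Mem Val Var Rf → ℝ≥0∞ := fun r m =>
      if F1 (restr hDR1 r) r = 0 then
        (if hne' : Nonempty (Mem Val Var Rf) then
          dirac (fun i => if h : i.1 ∈ R1 then r ⟨i.1, h⟩ else hne'.some i) m
        else 0)
      else (if Agree m r then F (restr hDR1 r) m / F1 (restr hDR1 r) r else 0) with hG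
    have hstep : ∀ (d : Mem Val Var D1) (c : ℝ≥0∞) (r : Mem Val Var R1),
        (∑' m : Mem Val Var Rf, if Agree m r then F d m / c else 0)
          = marg (F d) R1 r / c := by
      intro d c r
      unfold marg
      rw [div_eq_mul_inv, ← ENNReal.tsum_mul_right]
      refine tsum_congr fun m => ?_
      split_ifs with h
      · rw [div_eq_mul_inv]
      · rw [zero_mul]
    have hnetop : ∀ (d : Mem Val Var D1) (r : Mem Val Var R1), F1 d r ≠ ⊤ :=
      fun d r => (lt_of_le_of_lt (mass_le_one (hdist1 d) r) ENNReal.one_lt_top).ne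
    -- fallback extension facts
    have hfall : ∀ (r : Mem Val Var R1), F1 (restr hDR1 r) r = 0 →
        ∃ e : Mem Val Var Rf, G r = dirac e ∧ restr hsub e = r := by
      intro r h0
      have hne' : Nonempty (Mem Val Var Rf) := hne (restr hDR1 r)
      refine ⟨fun i => if h : i.1 ∈ R1 then r ⟨i.1, h⟩ else hne'.some i, ?_, ?_⟩
      · funext m
        simp only [hG]
        rw [if_pos h0, dif_pos hne']
      · funext t
        exact dif_pos t.2
    have hGmain : ∀ (r : Mem Val Var R1), F1 (restr hDR1 r) r ≠ 0 →
        G r = fun m => if Agree m r then F (restr hDR1 r) m / F1 (restr hDR1 r) r else 0 := by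
      intro r h0
      funext m
      simp only [hG]
      rw [if_neg h0]
    refine ⟨⟨R1, Rf, G⟩, ⟨hsub, ?_, ?_⟩, rfl, rfl, ?_⟩
    · -- IsDist
      intro r
      by_cases h0 : F1 (restr hDR1 r) r = 0
      · obtain ⟨e, hGe, _⟩ := hfall r h0
        rw [show (PKernel.f ⟨R1, Rf, G⟩ r) = G r from rfl, hGe]
        exact isDist_dirac e
      · show IsDist (G r)
        rw [hGmain r h0]
        unfold IsDist
        rw [hstep, ← hF1, ENNReal.div_self h0 (hnetop _ _)]
    · -- input preserving
      intro r
      funext r'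
      show marg (G r) R1 r' = dirac r r'
      by_cases h0 : F1 (restr hDR1 r) r = 0
      · obtain ⟨e, hGe, hre⟩ := hfall r h0
        rw [hGe, marg_eq_restr hsub]
        rw [tsum_eq_single e (fun m hm => by
          have : dirac e m = 0 := by unfold dirac; rw [if_neg hm]
          rw [this, ite_self])]
        rw [hre]
        unfold dirac
        rw [if_pos rfl]
        by_cases hrr : r' = r
        · rw [if_pos hrr.symm, if_pos hrr]
        · rw [if_neg (fun h => hrr h.symm), if_neg hrr]
      · rw [hGmain r h0]
        by_cases hrr : r' = r
        · subst hrr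
          unfold marg
          have heq : ∀ m : Mem Val Var Rf,
              (if Agree m r' then (if Agree m r' then
                F (restr hDR1 r') m / F1 (restr hDR1 r') r' else 0) else 0)
              = if Agree m r' then F (restr hDR1 r') m / F1 (restr hDR1 r') r' else 0 := by
            intro m; split_ifs with h <;> rfl
          rw [tsum_congr heq, hstep, ← hF1, ENNReal.div_self h0 (hnetop _ _)]
          unfold dirac
          rw [if_pos rfl]
        · unfold marg
          rw [tsum_congr (fun m => ?_), tsum_zero]
          · unfold dirac
            rw [if_neg hrr]
          · show (if Agree m r' then (if Agree m r then
                F (restr hDR1 r) m / F1 (restr hDR1 r) r else 0) else 0) = 0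
            split_ifs with ha hb
            · exfalso
              apply hrr
              rw [← (agree_iff_restr hsub m r').mp ha, (agree_iff_restr hsub m r).mp hb]
            · rfl
            · rfl
    · -- f = f1 ⊙ g
      have hpod : (podot ⟨D1, R1, F1⟩ ⟨R1, Rf, G⟩ : PKernel Val Var) =
          ⟨D1, Rf, fun d m => ∑' r : Mem Val Var R1, F1 d r * G r m⟩ := by
        refine congrArg (PKernel.mk D1 Rf) ?_
        funext d m
        exact dif_pos rfl
      rw [hpod]
      refine congrArg (PKernel.mk D1 Rf) ?_
      funext d m
      rw [tsum_eq_single (restr hsub m) (fun r hr => by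
        by_cases hz : F1 d r = 0
        · rw [hz, zero_mul]
        · have hdr : restr hDR1 r = d := pres_restr hDR1 hpres1 hz
          have : G r m = 0 := by
            rw [hGmain r (by rw [hdr]; exact hz)]
            exact if_neg (fun ha => hr ((agree_iff_restr hsub m r).mp ha).symm)
          rw [this, mul_zero])]
      by_cases hz : F1 d (restr hsub m) = 0
      · rw [hz, zero_mul]
        refine le_antisymm ?_ zero_le
        calc F d m ≤ marg (F d) R1 (restr hsub m) := le_marg hsub (F d) m
          _ = 0 := by rw [← hF1, hz]
      · have hdr : restr hDR1 (restr hsub m) = d := pres_restr hDR1 hpres1 hz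
        have hGr : G (restr hsub m) m = F d m / F1 d (restr hsub m) := by
          rw [hGmain _ (by rw [hdr]; exact hz), hdr]
          exact if_pos ((agree_iff_restr hsub m _).mpr rfl)
        rw [hGr, ENNReal.mul_div_cancel hz (hnetop _ _)]
end

section
/- Disintegration for powerset kernels: let f, f1, f2 be input-preserving powerset kernels with f1 ⊙ f2 defined (dom(f2) = range(f1)). If f = f1 ⊙ f2, then π_{range(f1)} f = f1. Conversely, if f is an input-preserving powerset kernel and f1 is an input-preserving powerset kernel with dom(f1) = dom(f), range(f1) ⊆ range(f), and π_{range(f1)} f = f1, then there exists an input-preserving powerset kernel g : Mem(range(f1)) → P(Mem(range(f))) with f = f1 ⊙ g. -/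
open scoped ENNReal

/-- Marginalization of a powerset kernel to a smaller range. -/
def margKR {Val Var : Type} (K : RKernel Val Var) (T : Set Var) :
    RKernel Val Var where
  dom := K.dom
  ran := T
  f := fun d => margS (K.f d) T

lemma agree_restr' {Val Var : Type} {S T : Set Var} (h : T ⊆ S) (m : Mem Val Var S) :
    Agree m (restr h m) := fun _ _ _ => rfl

lemma agree_eq_restr {Val Var : Type} {S T : Set Var} (h : T ⊆ S) {m : Mem Val Var S}
    {r : Mem Val Var T} (ha : Agree m r) : r = restr h m :=
  funext fun i => (ha i.1 (h i.2) i.2).symm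

lemma mem_margS_of_mem {Val Var : Type} {S T : Set Var} (h : T ⊆ S)
    {R : Set (Mem Val Var S)} {v : Mem Val Var S} (hv : v ∈ R) :
    restr h v ∈ margS R T := ⟨v, hv, agree_restr' h v⟩

lemma margS_singleton {Val Var : Type} {S T : Set Var} (h : T ⊆ S)
    {R : Set (Mem Val Var S)} {r : Mem Val Var T}
    (hne : R.Nonempty) (hall : ∀ v ∈ R, restr h v = r) : margS R T = {r} := by
  ext x
  constructor
  · rintro ⟨m, hm, ha⟩
    have hx := agree_eq_restr h ha
    simp [hx, hall m hm]
  · rintro rfl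
    obtain ⟨m, hm⟩ := hne
    exact (hall m hm) ▸ mem_margS_of_mem h hm

lemma of_margS_singleton {Val Var : Type} {S T : Set Var} (h : T ⊆ S)
    {R : Set (Mem Val Var S)} {r : Mem Val Var T}
    (heq : margS R T = {r}) : R.Nonempty ∧ ∀ v ∈ R, restr h v = r := by
  constructor
  · have : r ∈ margS R T := heq ▸ rfl
    obtain ⟨m, hm, _⟩ := this
    exact ⟨m, hm⟩
  · intro v hv
    have : restr h v ∈ margS R T := mem_margS_of_mem h hv
    rwa [heq] at this

/-- **Disintegration for powerset kernels.**
(i) If `f1, f2 ∈ M^P`, `f1 ⊙ f2` is defined (`range(f1) = dom(f2)`) and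
`f = f1 ⊙ f2`, then `π_{range(f1)} f = f1`.
(ii) Conversely, if `f, f1 ∈ M^P` with `dom(f1) = dom(f)`, `range(f1) ⊆ range(f)`
and `π_{range(f1)} f = f1`, then there is `g ∈ M^P` with
`g : Mem(range(f1)) → P(Mem(range(f)))` and `f = f1 ⊙ g`. -/
theorem MP_disintegration {Val Var : Type} [Fintype Val] [Fintype Var] :
    (∀ f f1 f2 : RKernel Val Var, InMP f → InMP f1 → InMP f2 →
        f1.ran = f2.dom → f = rodot f1 f2 → margKR f f1.ran = f1) ∧
    (∀ f f1 : RKernel Val Var, InMP f → InMP f1 →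
        f1.dom = f.dom → f1.ran ⊆ f.ran → margKR f f1.ran = f1 →
        ∃ g : RKernel Val Var, InMP g ∧ g.dom = f1.ran ∧ g.ran = f.ran ∧
          f = rodot f1 g) := by
  constructor
  · -- Part (i)
    rintro f ⟨f1d, f1r, f1f⟩ ⟨f2d, f2r, f2f⟩ _ _ hf2 hran heq
    simp only at hran
    subst hran
    subst heq
    obtain ⟨hf2sub, hf2m⟩ := hf2
    simp only at hf2sub hf2m
    show RKernel.mk f1d f1r
        (fun d => margS ((rodot (RKernel.mk f1d f1r f1f) (RKernel.mk f1r f2r f2f)).f d) f1r)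
      = RKernel.mk f1d f1r f1f
    refine congrArg (RKernel.mk f1d f1r) ?_
    funext d
    have hfd : (rodot (RKernel.mk f1d f1r f1f) (RKernel.mk f1r f2r f2f)).f d
        = {v | ∃ u ∈ f1f d, v ∈ f2f (restr (le_of_eq rfl) u)} := by
      simp [rodot]
    rw [hfd]
    ext r
    constructor
    · rintro ⟨v, ⟨u, hu, hv⟩, ha⟩
      obtain ⟨_, hrestr⟩ := of_margS_singleton hf2sub (hf2m (restr (le_of_eq rfl) u))
      have h1 : r = restr hf2sub v := agree_eq_restr hf2sub ha
      have h2 : restr hf2sub v = restr (le_of_eq rfl) u := hrestr v hv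
      have h3 : restr (le_of_eq (rfl : f1r = f1r)) u = u := rfl
      rw [h1, h2, h3]
      exact hu
    · intro hr
      obtain ⟨⟨v, hv⟩, hrestr⟩ := of_margS_singleton hf2sub (hf2m (restr (le_of_eq rfl) r))
      refine ⟨v, ⟨r, hr, hv⟩, ?_⟩
      have h2 : restr hf2sub v = r := hrestr v hv
      exact h2 ▸ agree_restr' hf2sub v
  · -- Part (ii)
    rintro ⟨fd, fr, ff⟩ ⟨f1d, f1r, f1f⟩ hf hf1 hdom hsub hmarg
    simp only at hdom hsub
    subst hdom
    obtain ⟨hfsub, hfm⟩ := hf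
    obtain ⟨hf1sub, hf1m⟩ := hf1
    simp only at hfsub hfm hf1sub hf1m
    have hmarg' : RKernel.mk f1d f1r (fun d => margS (ff d) f1r)
        = RKernel.mk f1d f1r f1f := hmarg
    have hmf : (fun d => margS (ff d) f1r) = f1f := by
      injection hmarg'
    -- the candidate fibers
    set Sb : Mem Val Var f1r → Set (Mem Val Var fr) :=
      fun u => {v | (∃ d, v ∈ ff d) ∧ Agree v u} with hSb
    classical
    refine ⟨RKernel.mk f1r fr
      (fun u => if (Sb u).Nonempty then Sb u else {v | Agree v u}), ?_, rfl, rfl, ?_⟩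
    · -- g ∈ M^P
      refine ⟨hsub, ?_⟩
      intro u
      simp only
      have hagree : ∀ v ∈ (if (Sb u).Nonempty then Sb u else {v | Agree v u}), Agree v u := by
        intro v hv
        by_cases h : (Sb u).Nonempty
        · rw [if_pos h] at hv; exact hv.2
        · rw [if_neg h] at hv; exact hv
      have hne : (if (Sb u).Nonempty then Sb u else {v | Agree v u}).Nonempty := by
        by_cases h : (Sb u).Nonempty
        · rwa [if_pos h]
        · rw [if_neg h]
          by_cases hv : Nonempty Val
          · obtain ⟨a⟩ := hv
            refine ⟨fun i => if h : i.1 ∈ f1r then u ⟨i.1, h⟩ else a, ?_⟩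
            intro i h1 h2
            simp [h2]
          · have hempty : ∀ i, i ∉ f1r := fun i hi => hv ⟨u ⟨i, hi⟩⟩
            have d0 : Mem Val Var f1d := fun i => absurd (hf1sub i.2) (hempty i.1)
            obtain ⟨⟨v0, hv0⟩, _⟩ := of_margS_singleton hfsub (hfm d0)
            exact ⟨v0, fun i h1 h2 => absurd h2 (hempty i)⟩
      exact margS_singleton hsub hne
        (fun v hv => (agree_eq_restr hsub (hagree v hv)).symm)
    · -- f = f1 ⊙ g
      show RKernel.mk f1d fr ff = RKernel.mk f1d fr _
      refine congrArg (RKernel.mk f1d fr) ?_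
      have hcond : (RKernel.mk f1d f1r f1f : RKernel Val Var).ran
          = (RKernel.mk f1r fr
            (fun u => if (Sb u).Nonempty then Sb u else {v | Agree v u})
              : RKernel Val Var).dom := rfl
      funext d
      show ff d = _
      simp only [rodot, dif_pos hcond]
      ext v
      constructor
      · intro hv
        set u : Mem Val Var f1r := restr hsub v with hu
        have huS : v ∈ Sb u := ⟨⟨d, hv⟩, agree_restr' hsub v⟩
        have hune : (Sb u).Nonempty := ⟨v, huS⟩
        refine ⟨u, ?_, ?_⟩
        · rw [← hmf]
          exact mem_margS_of_mem hsub hv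
        · show v ∈ if (Sb _).Nonempty then Sb _ else _
          have : restr (le_of_eq hcond.symm) u = u := rfl
          rw [this, if_pos hune]
          exact huS
      · rintro ⟨u, hu, hv⟩
        have hume : u ∈ margS (ff d) f1r := by
          have h := congrFun hmf d
          rw [h]; exact hu
        obtain ⟨w, hw, haw⟩ := hume
        have hune : (Sb u).Nonempty := ⟨w, ⟨d, hw⟩, haw⟩
        have hv' : v ∈ Sb u := by
          have : restr (le_of_eq hcond.symm) u = u := rfl
          rw [this, if_pos hune] at hv
          exact hv
        obtain ⟨⟨d', hd'⟩, hav⟩ := hv'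
        have hdd : d' = d := by
          have h1 : restr hfsub v = d' := (of_margS_singleton hfsub (hfm d')).2 v hd'
          have h2 : restr hf1sub u = d := (of_margS_singleton hf1sub (hf1m d)).2 u hu
          have h3 : restr hfsub v = d := by
            funext i
            have := hav i.1 (hfsub i.2) (hf1sub i.2)
            calc restr hfsub v i = u ⟨i.1, hf1sub i.2⟩ := this
              _ = restr hf1sub u i := rfl
              _ = d i := by rw [h2]
          rw [← h1, h3]
        rw [← hdd]
        exact hd'
end

section
/- If X and Y are independent conditioned on S in a finitely supported distribution μ on Mem(Var), then the values on X ∩ Y are determined by the values on S: for every m ∈ Mem(X ∩ Y) and s ∈ Mem(S) such that m ⊗ s is defined and μ(X ∩ Y = m, S = s) ≠ 0, one has μ(X ∩ Y = m | S = s) = 1. -/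
open scoped ENNReal

open Classical in
/-- `prS μ S s` is `μ(S = s)`: the total probability of memories whose restriction
to `S` is `s`. -/
noncomputable def prS {Val Var : Type} (μ : Mem Val Var (Set.univ : Set Var) → ℝ≥0∞)
    (S : Set Var) (s : Mem Val Var S) : ℝ≥0∞ :=
  ∑' m : Mem Val Var (Set.univ : Set Var), if Agree m s then μ m else 0

open Classical in
/-- `prS2 μ X x Z z` is the joint probability `μ(X = x, Z = z)`. -/
noncomputable def prS2 {Val Var : Type} (μ : Mem Val Var (Set.univ : Set Var) → ℝ≥0∞)
    (X : Set Var) (x : Mem Val Var X) (Z : Set Var) (z : Mem Val Var Z) : ℝ≥0∞ :=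
  ∑' m : Mem Val Var (Set.univ : Set Var), if Agree m x ∧ Agree m z then μ m else 0

open Classical in
/-- `prS3 μ X x Y y Z z` is the joint probability `μ(X = x, Y = y, Z = z)`. -/
noncomputable def prS3 {Val Var : Type} (μ : Mem Val Var (Set.univ : Set Var) → ℝ≥0∞)
    (X : Set Var) (x : Mem Val Var X) (Y : Set Var) (y : Mem Val Var Y)
    (Z : Set Var) (z : Mem Val Var Z) : ℝ≥0∞ :=
  ∑' m : Mem Val Var (Set.univ : Set Var),
    if Agree m x ∧ Agree m y ∧ Agree m z then μ m else 0

/-- `X` and `Y` are independent conditioned on `Z` in `μ`: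
`μ(X = x | Z = z) · μ(Y = y | Z = z) = μ(X = x, Y = y | Z = z)` for all `x, y, z`
with `μ(Z = z) ≠ 0`. -/
def CondIndep {Val Var : Type} (μ : Mem Val Var (Set.univ : Set Var) → ℝ≥0∞)
    (X Y Z : Set Var) : Prop :=
  ∀ (x : Mem Val Var X) (y : Mem Val Var Y) (z : Mem Val Var Z),
    prS μ Z z ≠ 0 →
    (prS2 μ X x Z z / prS μ Z z) * (prS2 μ Y y Z z / prS μ Z z) =
      prS3 μ X x Y y Z z / prS μ Z z

/-- **Conditional independence determines the overlap.** If `X` and `Y` are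
independent conditioned on `S` in a distribution `μ` on memories over `Var`, then
the values on `X ∩ Y` are determined by the values on `S`: for every memory `m`
over `X ∩ Y` and `s` over `S` with joint probability `μ(X ∩ Y = m, S = s) ≠ 0`
(in particular `m ⊗ s` is defined), the conditional probability
`μ(X ∩ Y = m | S = s)` equals `1`. -/
theorem ci_determines_overlap {Val Var : Type} [Fintype Val] [Fintype Var]
    (μ : Mem Val Var (Set.univ : Set Var) → ℝ≥0∞) (hμ : IsDist μ)
    (X Y S : Set Var) (hCI : CondIndep μ X Y S)
    (m : Mem Val Var (X ∩ Y : Set Var)) (s : Mem Val Var S)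
    (hne : prS2 μ (X ∩ Y) m S s ≠ 0) :
    prS2 μ (X ∩ Y) m S s / prS μ S s = 1 := by
  classical
  -- prS2 ≤ prS
  have hle : ∀ (T : Set Var) (t : Mem Val Var T), prS2 μ T t S s ≤ prS μ S s := by
    intro T t
    apply ENNReal.tsum_le_tsum
    intro n
    by_cases h1 : Agree n t ∧ Agree n s
    · simp [prS2, h1, h1.2]
    · simp only [h1, if_false]; exact zero_le
  -- prS ≤ 1
  have hc1 : prS μ S s ≤ 1 := by
    rw [← hμ]
    apply ENNReal.tsum_le_tsum
    intro n
    split_ifs <;> simp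
  have hcne : prS μ S s ≠ 0 := fun h0 => hne (le_antisymm (h0 ▸ hle _ m) (zero_le))
  have hctop : prS μ S s ≠ ⊤ := fun h => by simp [h] at hc1
  -- extract a witness memory n₀
  have hex : ∃ n₀, (Agree n₀ m ∧ Agree n₀ s) ∧ μ n₀ ≠ 0 := by
    by_contra hcon
    push_neg at hcon
    apply hne
    rw [prS2, ENNReal.tsum_eq_zero]
    intro n
    by_cases h : Agree n m ∧ Agree n s
    · simp [h, hcon n h]
    · simp [h]
  obtain ⟨n₀, ⟨hn₀m, hn₀s⟩, hn₀⟩ := hex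
  set x : Mem Val Var X := restr (Set.subset_univ X) n₀ with hxdef
  have hn₀x : Agree n₀ x := fun i h1 h2 => rfl
  have hx : prS2 μ X x S s ≠ 0 := by
    intro h0
    have hterm : (if Agree n₀ x ∧ Agree n₀ s then μ n₀ else 0) ≤ prS2 μ X x S s :=
      ENNReal.le_tsum n₀
    rw [if_pos ⟨hn₀x, hn₀s⟩, h0] at hterm
    exact hn₀ (le_antisymm hterm (zero_le))
  -- key: any memory in the support agreeing with s agrees with m
  have key : ∀ n, Agree n s → μ n ≠ 0 → Agree n m := by
    intro n hns hn
    set y : Mem Val Var Y := restr (Set.subset_univ Y) n with hydef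
    have hny : Agree n y := fun i h1 h2 => rfl
    have hy : prS2 μ Y y S s ≠ 0 := by
      intro h0
      have hterm : (if Agree n y ∧ Agree n s then μ n else 0) ≤ prS2 μ Y y S s :=
        ENNReal.le_tsum n
      rw [if_pos ⟨hny, hns⟩, h0] at hterm
      exact hn (le_antisymm hterm (zero_le))
    have hCIe := hCI x y s hcne
    have h3 : prS3 μ X x Y y S s ≠ 0 := by
      intro h0
      rw [h0, ENNReal.zero_div] at hCIe
      have hxd : prS2 μ X x S s / prS μ S s ≠ 0 := by
        rw [Ne, ENNReal.div_eq_zero_iff]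
        push_neg
        exact ⟨hx, hctop⟩
      have hyd : prS2 μ Y y S s / prS μ S s ≠ 0 := by
        rw [Ne, ENNReal.div_eq_zero_iff]
        push_neg
        exact ⟨hy, hctop⟩
      exact mul_ne_zero hxd hyd hCIe
    have hex' : ∃ n' : Mem Val Var (Set.univ : Set Var), Agree n' x ∧ Agree n' y ∧ Agree n' s := by
      by_contra hcon
      push_neg at hcon
      apply h3
      rw [prS3, ENNReal.tsum_eq_zero]
      intro n'
      by_cases h : Agree n' x ∧ Agree n' y ∧ Agree n' s
      · exact absurd h.2.2 (hcon n' h.1 h.2.1)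
      · simp [h]
    obtain ⟨n', hn'x, hn'y, _⟩ := hex'
    intro i h1 h2
    calc n ⟨i, h1⟩ = y ⟨i, h2.2⟩ := hny i h1 h2.2
      _ = n' ⟨i, Set.mem_univ i⟩ := (hn'y i (Set.mem_univ i) h2.2).symm
      _ = x ⟨i, h2.1⟩ := hn'x i (Set.mem_univ i) h2.1
      _ = n₀ ⟨i, Set.mem_univ i⟩ := rfl
      _ = m ⟨i, h2⟩ := hn₀m i (Set.mem_univ i) h2
  have heq : prS2 μ (X ∩ Y) m S s = prS μ S s := by
    rw [prS2, prS]
    apply tsum_congr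
    intro n
    by_cases hn : μ n = 0
    · split_ifs <;> simp [hn]
    · by_cases hns : Agree n s
      · rw [if_pos ⟨key n hns hn, hns⟩, if_pos hns]
      · rw [if_neg (fun h => hns h.2), if_neg hns]
  rw [heq]
  exact ENNReal.div_self hcne hctop
end
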